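/- Let (Xᵢ)_{i∈[n]} be discrete random variables and S₁,…,Sₘ ⊆ [n] be subsets such that each i ∈ [n] belongs to at least k of the sets Sⱼ. Then k·H(X₁,…,Xₙ) ≤ ∑_{j=1}^m H(Xᵢ : i ∈ Sⱼ). -/

import Mathlib

open Finset

open Classical in
noncomputable def prob {Ω : Type*} [Fintype Ω] (μ : Ω → ℝ) (E : Set Ω) : ℝ :=
  ∑ ω, if ω ∈ E then μ ω else 0

noncomputable def entropy {Ω α : Type*} [Fintype Ω] (μ : Ω → ℝ) (X : Ω → α) : ℝ :=
  -∑ ω, μ ω * Real.logb 2 (prob μ {ω' | X ω' = X ω})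

namespace ShearerAux

variable {Ω : Type*} [Fintype Ω] {μ : Ω → ℝ}

open Classical in
lemma prob_eq_sum_filter (E : Set Ω) :
    prob μ E = ∑ ω ∈ Finset.univ.filter (· ∈ E), μ ω := by
  rw [prob, Finset.sum_filter]

lemma prob_nonneg (hμ0 : ∀ ω, 0 ≤ μ ω) (E : Set Ω) : 0 ≤ prob μ E := by
  classical
  refine Finset.sum_nonneg fun ω _ => ?_
  split <;> simp [hμ0 ω]

lemma prob_mono (hμ0 : ∀ ω, 0 ≤ μ ω) {E F : Set Ω} (h : E ⊆ F) :
    prob μ E ≤ prob μ F := by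
  classical
  refine Finset.sum_le_sum fun ω _ => ?_
  by_cases hE : ω ∈ E
  · simp [hE, h hE]
  · simp only [hE, if_neg, if_false]
    split <;> simp [hμ0 ω]

lemma le_prob (hμ0 : ∀ ω, 0 ≤ μ ω) {α : Type*} (F : Ω → α) (ω : Ω) :
    μ ω ≤ prob μ {ω' | F ω' = F ω} := by
  classical
  have := Finset.single_le_sum (f := fun ω' => if F ω' = F ω then μ ω' else 0)
    (fun ω' _ => by split <;> simp [hμ0 ω']) (Finset.mem_univ ω)
  simpa [prob] using this

lemma prob_pos (hμ0 : ∀ ω, 0 ≤ μ ω) {α : Type*} (F : Ω → α) {ω : Ω} (hω : 0 < μ ω) :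
    0 < prob μ {ω' | F ω' = F ω} :=
  lt_of_lt_of_le hω (le_prob hμ0 F ω)

lemma entropy_congr {α β : Type*} {F : Ω → α} {G : Ω → β}
    (h : ∀ ω ω', F ω' = F ω ↔ G ω' = G ω) : entropy μ F = entropy μ G := by
  unfold entropy
  congr 1
  refine Finset.sum_congr rfl fun ω _ => ?_
  have : {ω' | F ω' = F ω} = {ω' | G ω' = G ω} := Set.ext fun ω' => h ω ω'
  rw [this]

lemma entropy_le_entropy (hμ0 : ∀ ω, 0 ≤ μ ω) {α β : Type*} {F : Ω → α} {G : Ω → β}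
    (h : ∀ ω ω', F ω' = F ω → G ω' = G ω) : entropy μ G ≤ entropy μ F := by
  unfold entropy
  rw [neg_le_neg_iff]
  refine Finset.sum_le_sum fun ω _ => ?_
  rcases eq_or_lt_of_le (hμ0 ω) with h0 | h0
  · rw [← h0]; ring_nf; rfl
  · refine mul_le_mul_of_nonneg_left ?_ (le_of_lt h0)
    exact Real.logb_le_logb_of_le one_lt_two (prob_pos hμ0 F h0)
      (prob_mono hμ0 fun ω' hω' => h ω ω' hω')

lemma entropy_eq_zero (hμ1 : ∑ ω, μ ω = 1) {α : Type*} {F : Ω → α}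
    (h : ∀ ω ω', F ω' = F ω) : entropy μ F = 0 := by
  unfold entropy
  have : ∀ ω : Ω, prob μ {ω' | F ω' = F ω} = 1 := by
    classical
    intro ω
    rw [show prob μ {ω' | F ω' = F ω} = ∑ ω' : Ω, μ ω' from ?_]
    · exact hμ1
    · rw [prob]
      exact Finset.sum_congr rfl fun ω' _ => by simp [h ω ω']
  simp [this]

lemma sum_disjoint_le {δ : Type*} (hμ0 : ∀ ω, 0 ≤ μ ω) (V : Finset δ) (t : δ → Finset Ω)
    (hd : (V : Set δ).PairwiseDisjoint t) (s : Finset Ω) (hsub : ∀ v ∈ V, t v ⊆ s) :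
    ∑ v ∈ V, ∑ ω ∈ t v, μ ω ≤ ∑ ω ∈ s, μ ω := by
  classical
  rw [← Finset.sum_biUnion hd]
  exact Finset.sum_le_sum_of_subset_of_nonneg (Finset.biUnion_subset.mpr hsub)
    (fun ω _ _ => hμ0 ω)

set_option maxHeartbeats 2000000 in
open Classical in
lemma core (hμ0 : ∀ ω, 0 ≤ μ ω) (hμ1 : ∑ ω, μ ω = 1)
    {α β γ : Type*} (F : Ω → α) (G : Ω → β) (K : Ω → γ)
    (a b c d : Ω → ℝ)
    (hA : ∀ ω, a ω = prob μ {ω' | F ω' = F ω ∧ G ω' = G ω ∧ K ω' = K ω})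
    (hB : ∀ ω, b ω = prob μ {ω' | F ω' = F ω ∧ G ω' = G ω})
    (hC : ∀ ω, c ω = prob μ {ω' | G ω' = G ω ∧ K ω' = K ω})
    (hD : ∀ ω, d ω = prob μ {ω' | G ω' = G ω}) :
    (-∑ ω, μ ω * Real.logb 2 (a ω)) + (-∑ ω, μ ω * Real.logb 2 (d ω))
      ≤ (-∑ ω, μ ω * Real.logb 2 (b ω)) + (-∑ ω, μ ω * Real.logb 2 (c ω)) := by
  classical
  set T : Ω → α × β × γ := fun ω => (F ω, G ω, K ω) with hT
  set A : α × β × γ → ℝ := fun v => ∑ ω ∈ univ.filter (fun ω => T ω = v), μ ω with hAA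
  set B : α × β → ℝ := fun w => ∑ ω ∈ univ.filter (fun ω => F ω = w.1 ∧ G ω = w.2), μ ω
    with hBB
  set C : β × γ → ℝ := fun u => ∑ ω ∈ univ.filter (fun ω => G ω = u.1 ∧ K ω = u.2), μ ω
    with hCC
  set D : β → ℝ := fun y => ∑ ω ∈ univ.filter (fun ω => G ω = y), μ ω with hDD
  have hAn : ∀ v, 0 ≤ A v := fun v => Finset.sum_nonneg fun ω _ => hμ0 ω
  have hBn : ∀ w, 0 ≤ B w := fun w => Finset.sum_nonneg fun ω _ => hμ0 ω
  have hCn : ∀ u, 0 ≤ C u := fun u => Finset.sum_nonneg fun ω _ => hμ0 ω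
  have hDn : ∀ y, 0 ≤ D y := fun y => Finset.sum_nonneg fun ω _ => hμ0 ω
  have haA : ∀ ω, a ω = A (T ω) := by
    intro ω
    rw [hA, prob_eq_sum_filter, hAA]
    apply Finset.sum_congr _ (fun _ _ => rfl)
    ext ω'
    simp [hT, Prod.ext_iff]
  have hbB : ∀ ω, b ω = B (F ω, G ω) := by
    intro ω
    rw [hB, prob_eq_sum_filter, hBB]
    apply Finset.sum_congr _ (fun _ _ => rfl)
    ext ω'
    simp
  have hcC : ∀ ω, c ω = C (G ω, K ω) := by
    intro ω
    rw [hC, prob_eq_sum_filter, hCC]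
    apply Finset.sum_congr _ (fun _ _ => rfl)
    ext ω'
    simp
  have hdD : ∀ ω, d ω = D (G ω) := by
    intro ω
    rw [hD, prob_eq_sum_filter, hDD]
    apply Finset.sum_congr _ (fun _ _ => rfl)
    ext ω'
    simp
  -- pointwise positivity when μ ω > 0
  have hapos : ∀ ω, 0 < μ ω → 0 < a ω := by
    intro ω h0
    rw [haA ω, hAA]
    refine lt_of_lt_of_le h0 (Finset.single_le_sum (fun ω' _ => hμ0 ω') ?_)
    simp
  have hbpos : ∀ ω, 0 < μ ω → 0 < b ω := by
    intro ω h0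
    rw [hbB ω, hBB]
    refine lt_of_lt_of_le h0 (Finset.single_le_sum (fun ω' _ => hμ0 ω') ?_)
    simp
  have hcpos : ∀ ω, 0 < μ ω → 0 < c ω := by
    intro ω h0
    rw [hcC ω, hCC]
    refine lt_of_lt_of_le h0 (Finset.single_le_sum (fun ω' _ => hμ0 ω') ?_)
    simp
  have hdpos : ∀ ω, 0 < μ ω → 0 < d ω := by
    intro ω h0
    rw [hdD ω, hDD]
    refine lt_of_lt_of_le h0 (Finset.single_le_sum (fun ω' _ => hμ0 ω') ?_)
    simp
  -- step 2 : the combinatorial bound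
  have key2 : ∑ ω, μ ω * (b ω * c ω / (a ω * d ω)) ≤ 1 := by
    calc ∑ ω, μ ω * (b ω * c ω / (a ω * d ω))
        = ∑ v ∈ univ.image T, ∑ ω ∈ univ.filter (fun ω => T ω = v),
            μ ω * (b ω * c ω / (a ω * d ω)) :=
          (Finset.sum_fiberwise_of_maps_to (fun ω _ => mem_image_of_mem T (mem_univ ω))
            _).symm
      _ ≤ ∑ v ∈ univ.image T, B (v.1, v.2.1) * C (v.2.1, v.2.2) / D v.2.1 := by
          refine Finset.sum_le_sum fun v hv => ?_
          have hconst : ∀ ω ∈ univ.filter (fun ω => T ω = v),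
              μ ω * (b ω * c ω / (a ω * d ω))
                = μ ω * (B (v.1, v.2.1) * C (v.2.1, v.2.2) / (A v * D v.2.1)) := by
            intro ω hω
            have hTv : T ω = v := (mem_filter.1 hω).2
            have hF : F ω = v.1 := by rw [← hTv]
            have hG : G ω = v.2.1 := by rw [← hTv]
            have hK : K ω = v.2.2 := by rw [← hTv]
            rw [haA ω, hbB ω, hcC ω, hdD ω, hTv, hF, hG, hK]
          rw [Finset.sum_congr rfl hconst, ← Finset.sum_mul]
          have hfold : ∑ ω ∈ univ.filter (fun ω => T ω = v), μ ω = A v := rfl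
          rw [hfold]
          have hAD : A v ≤ D v.2.1 := by
            refine Finset.sum_le_sum_of_subset_of_nonneg ?_ (fun ω _ _ => hμ0 ω)
            intro ω hω
            have hTv : T ω = v := (mem_filter.1 hω).2
            have hG : G ω = v.2.1 := by rw [← hTv]
            simp [mem_filter, hG]
          rcases eq_or_lt_of_le (hAn v) with h0 | h0
          · rw [← h0, zero_mul]
            exact div_nonneg (mul_nonneg (hBn _) (hCn _)) (hDn _)
          · have hDpos : 0 < D v.2.1 := lt_of_lt_of_le h0 hAD
            apply le_of_eq
            field_simp
      _ = ∑ w ∈ (univ.image T).image (fun v => (v.1, v.2.1)),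
            ∑ v ∈ (univ.image T).filter (fun v => (v.1, v.2.1) = w),
              B (v.1, v.2.1) * C (v.2.1, v.2.2) / D v.2.1 :=
          (Finset.sum_fiberwise_of_maps_to (fun v hv => mem_image_of_mem _ hv) _).symm
      _ ≤ ∑ w ∈ (univ.image T).image (fun v => (v.1, v.2.1)), B w := by
          refine Finset.sum_le_sum fun w hw => ?_
          have hconst : ∀ v ∈ (univ.image T).filter (fun v => (v.1, v.2.1) = w),
              B (v.1, v.2.1) * C (v.2.1, v.2.2) / D v.2.1
                = B w * C (w.2, v.2.2) / D w.2 := by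
            intro v hv
            have hvw : (v.1, v.2.1) = w := (mem_filter.1 hv).2
            have h2 : v.2.1 = w.2 := by rw [← hvw]
            rw [hvw, h2]
          rw [Finset.sum_congr rfl hconst]
          have hCsum : ∑ v ∈ (univ.image T).filter (fun v => (v.1, v.2.1) = w),
              C (w.2, v.2.2) ≤ D w.2 := by
            refine sum_disjoint_le hμ0 _
              (fun v : α × β × γ => univ.filter (fun ω => G ω = w.2 ∧ K ω = v.2.2)) ?_
              (univ.filter (fun ω => G ω = w.2)) ?_
            · intro v hv v' hv' hne
              simp only [Finset.coe_filter, Set.mem_setOf_eq, mem_filter] at hv hv'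
              have hz : v.2.2 ≠ v'.2.2 := by
                intro h
                apply hne
                have e1 : v.1 = w.1 := by rw [← hv.2]
                have e2 : v.2.1 = w.2 := by rw [← hv.2]
                have e1' : v'.1 = w.1 := by rw [← hv'.2]
                have e2' : v'.2.1 = w.2 := by rw [← hv'.2]
                exact Prod.ext (e1.trans e1'.symm) (Prod.ext (e2.trans e2'.symm) h)
              simp only [Function.onFun]
              rw [Finset.disjoint_left]
              intro ω h1 h2
              simp only [mem_filter] at h1 h2
              exact hz (h1.2.2 ▸ h2.2.2 ▸ rfl)
            · intro v hv ω hω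
              simp only [mem_filter] at hω ⊢
              exact ⟨hω.1, hω.2.1⟩
          have hre : ∑ v ∈ (univ.image T).filter (fun v => (v.1, v.2.1) = w),
              B w * C (w.2, v.2.2) / D w.2
                = B w * (∑ v ∈ (univ.image T).filter (fun v => (v.1, v.2.1) = w),
                    C (w.2, v.2.2)) / D w.2 := by
            rw [Finset.mul_sum, Finset.sum_div]
          rw [hre]
          rcases eq_or_lt_of_le (hDn w.2) with h0 | h0
          · rw [← h0, div_zero]
            exact hBn w
          · rw [div_le_iff₀ h0]
            exact mul_le_mul_of_nonneg_left hCsum (hBn w)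
      _ ≤ 1 := by
          rw [← hμ1]
          refine sum_disjoint_le hμ0 _
            (fun w : α × β => univ.filter (fun ω => F ω = w.1 ∧ G ω = w.2)) ?_ univ
            (fun w _ => Finset.subset_univ _)
          intro w hw w' hw' hne
          simp only [Function.onFun]
          rw [Finset.disjoint_left]
          intro ω h1 h2
          simp only [mem_filter] at h1 h2
          exact hne (Prod.ext (h1.2.1 ▸ h2.2.1 ▸ rfl) (h1.2.2 ▸ h2.2.2 ▸ rfl))
  -- step 1 : pointwise log bound
  have key1 : ∀ ω, μ ω * (Real.logb 2 (b ω) + Real.logb 2 (c ω)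
      - Real.logb 2 (a ω) - Real.logb 2 (d ω))
      ≤ (μ ω * (b ω * c ω / (a ω * d ω)) - μ ω) / Real.log 2 := by
    intro ω
    rcases eq_or_lt_of_le (hμ0 ω) with h0 | h0
    · rw [← h0]; simp
    · have hap := hapos ω h0
      have hbp := hbpos ω h0
      have hcp := hcpos ω h0
      have hdp := hdpos ω h0
      have hr : 0 < b ω * c ω / (a ω * d ω) := by positivity
      have hlog : Real.log (b ω * c ω / (a ω * d ω))
          ≤ b ω * c ω / (a ω * d ω) - 1 := Real.log_le_sub_one_of_pos hr
      have hsum : Real.logb 2 (b ω) + Real.logb 2 (c ω)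
          - Real.logb 2 (a ω) - Real.logb 2 (d ω)
          = Real.log (b ω * c ω / (a ω * d ω)) / Real.log 2 := by
        rw [Real.log_div (by positivity) (by positivity),
          Real.log_mul (ne_of_gt hbp) (ne_of_gt hcp),
          Real.log_mul (ne_of_gt hap) (ne_of_gt hdp),
          Real.logb, Real.logb, Real.logb, Real.logb]
        ring
      rw [hsum, mul_div_assoc']
      rw [div_le_div_iff₀ (Real.log_pos one_lt_two) (Real.log_pos one_lt_two)]
      have h1 : μ ω * Real.log (b ω * c ω / (a ω * d ω))
          ≤ μ ω * (b ω * c ω / (a ω * d ω) - 1) :=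
        mul_le_mul_of_nonneg_left hlog (le_of_lt h0)
      nlinarith [Real.log_pos (show (1:ℝ) < 2 by norm_num)]
  -- combine
  have total : ∑ ω, μ ω * (Real.logb 2 (b ω) + Real.logb 2 (c ω)
      - Real.logb 2 (a ω) - Real.logb 2 (d ω)) ≤ 0 := by
    calc ∑ ω, μ ω * (Real.logb 2 (b ω) + Real.logb 2 (c ω)
        - Real.logb 2 (a ω) - Real.logb 2 (d ω))
        ≤ ∑ ω, (μ ω * (b ω * c ω / (a ω * d ω)) - μ ω) / Real.log 2 :=
          Finset.sum_le_sum fun ω _ => key1 ω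
      _ = ((∑ ω, μ ω * (b ω * c ω / (a ω * d ω))) - 1) / Real.log 2 := by
          rw [← Finset.sum_div, Finset.sum_sub_distrib, hμ1]
      _ ≤ 0 := by
          apply div_nonpos_of_nonpos_of_nonneg
          · linarith
          · exact le_of_lt (Real.log_pos one_lt_two)
  have expand : ∑ ω, μ ω * (Real.logb 2 (b ω) + Real.logb 2 (c ω)
      - Real.logb 2 (a ω) - Real.logb 2 (d ω))
      = (∑ ω, μ ω * Real.logb 2 (b ω)) + (∑ ω, μ ω * Real.logb 2 (c ω))
        - (∑ ω, μ ω * Real.logb 2 (a ω)) - (∑ ω, μ ω * Real.logb 2 (d ω)) := by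
    rw [← Finset.sum_add_distrib, ← Finset.sum_sub_distrib, ← Finset.sum_sub_distrib]
    exact Finset.sum_congr rfl fun ω _ => by ring
  linarith [expand ▸ total]


set_option maxHeartbeats 2000000

section sets

variable {n : ℕ} {κ : Fin n → Type*}

lemma entropy_eq {α : Type*} (F : Ω → α) (p : Ω → ℝ)
    (hp : ∀ ω, prob μ {ω' | F ω' = F ω} = p ω) :
    entropy μ F = -∑ ω, μ ω * Real.logb 2 (p ω) := by
  unfold entropy
  congr 1
  exact Finset.sum_congr rfl fun ω _ => by rw [hp ω]

lemma restrict_fiber (X : ∀ i, Ω → κ i) (A : Finset (Fin n)) (ω ω' : Ω) :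
    ((fun i : {x // x ∈ A} => X i.1 ω') = fun i : {x // x ∈ A} => X i.1 ω)
      ↔ ∀ i ∈ A, X i ω' = X i ω := by
  rw [funext_iff]
  exact ⟨fun h i hi => h ⟨i, hi⟩, fun h i => h i.1 i.2⟩

noncomputable def Hs (μ : Ω → ℝ) (X : ∀ i, Ω → κ i) (A : Finset (Fin n)) : ℝ :=
  entropy μ (fun ω => fun i : {x // x ∈ A} => X i.1 ω)

lemma Hs_mono (hμ0 : ∀ ω, 0 ≤ μ ω) (X : ∀ i, Ω → κ i) {A B : Finset (Fin n)}
    (hAB : A ⊆ B) : Hs μ X A ≤ Hs μ X B := by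
  refine entropy_le_entropy hμ0 fun ω ω' h => ?_
  rw [restrict_fiber] at h ⊢
  exact fun i hi => h i (hAB hi)

lemma Hs_nonneg (hμ0 : ∀ ω, 0 ≤ μ ω) (hμ1 : ∑ ω, μ ω = 1) (X : ∀ i, Ω → κ i)
    (A : Finset (Fin n)) : 0 ≤ Hs μ X A := by
  have h0 : Hs μ X ∅ = 0 := by
    refine entropy_eq_zero hμ1 fun ω ω' => ?_
    funext i
    exact absurd i.2 (Finset.notMem_empty i.1)
  rw [← h0]
  exact Hs_mono hμ0 X (Finset.empty_subset A)

lemma cover3 (A B : Finset (Fin n)) (P : Fin n → Prop) :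
    ((∀ i ∈ A \ B, P i) ∧ (∀ i ∈ A ∩ B, P i) ∧ (∀ i ∈ B \ A, P i))
      ↔ ∀ i ∈ A ∪ B, P i := by
  simp only [mem_sdiff, mem_inter, mem_union, and_imp]
  constructor
  · rintro ⟨h1, h2, h3⟩ i hi
    by_cases hA : i ∈ A <;> by_cases hB : i ∈ B
    · exact h2 i hA hB
    · exact h1 i hA hB
    · exact h3 i hB hA
    · tauto
  · intro h
    refine ⟨fun i hA _ => h i (Or.inl hA), fun i hA _ => h i (Or.inl hA),
      fun i hB _ => h i (Or.inr hB)⟩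

lemma cover2l (A B : Finset (Fin n)) (P : Fin n → Prop) :
    ((∀ i ∈ A \ B, P i) ∧ (∀ i ∈ A ∩ B, P i)) ↔ ∀ i ∈ A, P i := by
  simp only [mem_sdiff, mem_inter, and_imp]
  constructor
  · rintro ⟨h1, h2⟩ i hi
    by_cases hB : i ∈ B
    · exact h2 i hi hB
    · exact h1 i hi hB
  · tauto

lemma cover2r (A B : Finset (Fin n)) (P : Fin n → Prop) :
    ((∀ i ∈ A ∩ B, P i) ∧ (∀ i ∈ B \ A, P i)) ↔ ∀ i ∈ B, P i := by
  simp only [mem_sdiff, mem_inter, and_imp]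
  constructor
  · rintro ⟨h1, h2⟩ i hi
    by_cases hA : i ∈ A
    · exact h1 i hA hi
    · exact h2 i hi hA
  · tauto

lemma Hs_submodular (hμ0 : ∀ ω, 0 ≤ μ ω) (hμ1 : ∑ ω, μ ω = 1) (X : ∀ i, Ω → κ i)
    (A B : Finset (Fin n)) :
    Hs μ X (A ∪ B) + Hs μ X (A ∩ B) ≤ Hs μ X A + Hs μ X B := by
  classical
  set F : Ω → _ := fun ω => fun i : {x // x ∈ A \ B} => X i.1 ω with hF
  set G : Ω → _ := fun ω => fun i : {x // x ∈ A ∩ B} => X i.1 ω with hG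
  set K : Ω → _ := fun ω => fun i : {x // x ∈ B \ A} => X i.1 ω with hK
  have h := core hμ0 hμ1 F G K
    (fun ω => prob μ {ω' | F ω' = F ω ∧ G ω' = G ω ∧ K ω' = K ω})
    (fun ω => prob μ {ω' | F ω' = F ω ∧ G ω' = G ω})
    (fun ω => prob μ {ω' | G ω' = G ω ∧ K ω' = K ω})
    (fun ω => prob μ {ω' | G ω' = G ω})
    (fun ω => rfl) (fun ω => rfl) (fun ω => rfl) (fun ω => rfl)
  have e1 : Hs μ X (A ∪ B)
      = -∑ ω, μ ω * Real.logb 2 (prob μ {ω' | F ω' = F ω ∧ G ω' = G ω ∧ K ω' = K ω}) := by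
    unfold Hs
    refine entropy_eq _ _ fun ω => congrArg (prob μ) (Set.ext fun ω' => ?_)
    simp only [Set.mem_setOf_eq, hF, hG, hK, restrict_fiber]
    exact (cover3 A B _).symm
  have e2 : Hs μ X A
      = -∑ ω, μ ω * Real.logb 2 (prob μ {ω' | F ω' = F ω ∧ G ω' = G ω}) := by
    unfold Hs
    refine entropy_eq _ _ fun ω => congrArg (prob μ) (Set.ext fun ω' => ?_)
    simp only [Set.mem_setOf_eq, hF, hG, restrict_fiber]
    exact (cover2l A B _).symm
  have e3 : Hs μ X B
      = -∑ ω, μ ω * Real.logb 2 (prob μ {ω' | G ω' = G ω ∧ K ω' = K ω}) := by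
    unfold Hs
    refine entropy_eq _ _ fun ω => congrArg (prob μ) (Set.ext fun ω' => ?_)
    simp only [Set.mem_setOf_eq, hG, hK, restrict_fiber]
    exact (cover2r A B _).symm
  have e4 : Hs μ X (A ∩ B)
      = -∑ ω, μ ω * Real.logb 2 (prob μ {ω' | G ω' = G ω}) := by
    unfold Hs
    exact entropy_eq _ _ fun ω => congrArg (prob μ) (Set.ext fun ω' => by
      simp only [Set.mem_setOf_eq, hG])
  rw [e1, e2, e3, e4]
  exact h

end sets

end ShearerAux

set_option maxHeartbeats 2000000 in
open ShearerAux in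
theorem shearer {Ω : Type*} [Fintype Ω] (μ : Ω → ℝ)
    (hμ0 : ∀ ω, 0 ≤ μ ω) (hμ1 : ∑ ω, μ ω = 1)
    {n m k : ℕ} {α : Fin n → Type*} (X : ∀ i, Ω → α i)
    (S : Fin m → Finset (Fin n))
    (hcover : ∀ i : Fin n, k ≤ (Finset.univ.filter (fun j => i ∈ S j)).card) :
    (k : ℝ) * entropy μ (fun ω => fun i : Fin n => X i ω)
      ≤ ∑ j : Fin m, entropy μ (fun ω => fun i : {x // x ∈ S j} => X i.1 ω) := by
  classical
  set g : Finset (Fin n) → ℕ → ℝ :=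
    fun A t => Hs μ X (A.filter (fun x : Fin n => (x : ℕ) < t)) with hg
  -- telescoping
  have tel : ∀ A : Finset (Fin n), Hs μ X A = ∑ i : Fin n, (g A (i.val + 1) - g A i.val) := by
    intro A
    rw [Fin.sum_univ_eq_sum_range (fun t => g A (t + 1) - g A t) n,
      Finset.sum_range_sub (g A) n]
    have h1 : g A n = Hs μ X A := by
      simp only [hg]
      rw [Finset.filter_true_of_mem (fun x _ => x.isLt)]
    have h2 : g A 0 = 0 := by
      simp only [hg]
      have he : A.filter (fun x : Fin n => (x : ℕ) < 0) = ∅ := by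
        apply Finset.filter_false_of_mem
        intro x _
        omega
      rw [he]
      refine entropy_eq_zero hμ1 fun ω ω' => ?_
      funext i
      exact absurd i.2 (Finset.notMem_empty i.1)
    rw [h1, h2, sub_zero]
  have hD0 : ∀ i : Fin n, 0 ≤ g univ (i.val + 1) - g univ i.val := by
    intro i
    rw [sub_nonneg]
    apply Hs_mono hμ0 X
    exact Finset.monotone_filter_right _ fun x hx => by omega
  -- key step
  have key : ∀ (j : Fin m) (i : Fin n),
      (if i ∈ S j then g univ (i.val + 1) - g univ i.val else 0)
        ≤ g (S j) (i.val + 1) - g (S j) i.val := by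
    intro j i
    by_cases hij : i ∈ S j
    · rw [if_pos hij]
      have hsub := Hs_submodular hμ0 hμ1 X
        ((S j).filter (fun x : Fin n => (x : ℕ) < i.val + 1))
        (univ.filter (fun x : Fin n => (x : ℕ) < i.val))
      have hU : (S j).filter (fun x : Fin n => (x : ℕ) < i.val + 1)
          ∪ univ.filter (fun x : Fin n => (x : ℕ) < i.val)
          = univ.filter (fun x : Fin n => (x : ℕ) < i.val + 1) := by
        ext x
        simp only [mem_union, mem_filter, mem_univ, true_and]
        constructor
        · rintro (⟨_, h⟩ | h) <;> omega
        · intro hx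
          by_cases hlt : (x : ℕ) < i.val
          · exact Or.inr hlt
          · have : x = i := by
              apply Fin.ext
              omega
            exact Or.inl ⟨this ▸ hij, hx⟩
      have hI : (S j).filter (fun x : Fin n => (x : ℕ) < i.val + 1)
          ∩ univ.filter (fun x : Fin n => (x : ℕ) < i.val)
          = (S j).filter (fun x : Fin n => (x : ℕ) < i.val) := by
        ext x
        simp only [mem_inter, mem_filter, mem_univ, true_and]
        constructor
        · rintro ⟨⟨h1, _⟩, h3⟩
          exact ⟨h1, h3⟩
        · rintro ⟨h1, h2⟩
          exact ⟨⟨h1, by omega⟩, h2⟩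
      rw [hU, hI] at hsub
      have := hsub
      simp only [hg]
      linarith
    · rw [if_neg hij, sub_nonneg]
      apply Hs_mono hμ0 X
      exact Finset.monotone_filter_right _ fun x hx => by omega
  -- final computation
  have eL : entropy μ (fun ω => fun i : Fin n => X i ω) = Hs μ X univ := by
    refine entropy_congr fun ω ω' => ?_
    rw [funext_iff, restrict_fiber]
    exact ⟨fun h i _ => h i, fun h i => h i (mem_univ i)⟩
  rw [eL]
  have eR : ∀ j : Fin m,
      entropy μ (fun ω => fun i : {x // x ∈ S j} => X i.1 ω) = Hs μ X (S j) :=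
    fun j => rfl
  calc (k : ℝ) * Hs μ X univ
      = ∑ i : Fin n, (k : ℝ) * (g univ (i.val + 1) - g univ i.val) := by
        rw [tel univ, Finset.mul_sum]
    _ ≤ ∑ i : Fin n, ((Finset.univ.filter (fun j => i ∈ S j)).card : ℝ)
          * (g univ (i.val + 1) - g univ i.val) := by
        refine Finset.sum_le_sum fun i _ => ?_
        exact mul_le_mul_of_nonneg_right (by exact_mod_cast hcover i) (hD0 i)
    _ = ∑ i : Fin n, ∑ j : Fin m,
          (if i ∈ S j then g univ (i.val + 1) - g univ i.val else 0) := by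
        refine Finset.sum_congr rfl fun i _ => ?_
        rw [← Finset.sum_filter, Finset.sum_const, nsmul_eq_mul]
    _ = ∑ j : Fin m, ∑ i : Fin n,
          (if i ∈ S j then g univ (i.val + 1) - g univ i.val else 0) :=
        Finset.sum_comm
    _ ≤ ∑ j : Fin m, ∑ i : Fin n, (g (S j) (i.val + 1) - g (S j) i.val) :=
        Finset.sum_le_sum fun j _ => Finset.sum_le_sum fun i _ => key j i
    _ = ∑ j : Fin m, entropy μ (fun ω => fun i : {x // x ∈ S j} => X i.1 ω) := by
        refine Finset.sum_congr rfl fun j _ => ?_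
        rw [eR j, tel (S j)]
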